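/- Let h = Lie(x_1, …, x_n) / ideal([x_i, x_1 + ⋯ + x_n] : 1 ≤ i ≤ n) be the holonomy Lie algebra (over ℚ) of the uniform matroid U_{2,n}. Then h is isomorphic, as a graded Lie algebra, to the direct product Lie(ℚ^{n−1}) × Lie(ℚ) of a free Lie algebra on n−1 generators and a free Lie algebra on one generator. -/

import Mathlib

attribute [local instance] LieRing.ofAssociativeRing
lemma freeLie_unit_eq (q : FreeLieAlgebra ℚ Unit) :
    (FreeLieAlgebra.lift ℚ (fun _ => (1:ℚ))) q • FreeLieAlgebra.of ℚ () = q := by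
  let τ : ℚ →ₗ⁅ℚ⁆ FreeLieAlgebra ℚ Unit :=
    { toFun := fun c => c • FreeLieAlgebra.of ℚ ()
      map_add' := fun a b => add_smul a b _
      map_smul' := fun c d => mul_smul c d _
      map_lie' := by
        intro c d
        show ⁅c, d⁆ • _ = ⁅c • FreeLieAlgebra.of ℚ (), d • FreeLieAlgebra.of ℚ ()⁆
        rw [Ring.lie_def, smul_lie, lie_smul, lie_self, smul_zero, smul_zero]
        rw [mul_comm, sub_self, zero_smul] }
  have h : τ.comp (FreeLieAlgebra.lift ℚ (fun _ => (1:ℚ))) = LieHom.id := by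
    apply FreeLieAlgebra.hom_ext
    intro u
    show τ (FreeLieAlgebra.lift ℚ (fun _ => (1:ℚ)) (FreeLieAlgebra.of ℚ u)) = _
    rw [FreeLieAlgebra.lift_of_apply]
    show (1:ℚ) • FreeLieAlgebra.of ℚ () = FreeLieAlgebra.of ℚ u
    rw [one_smul]
  exact LieHom.congr_fun h q

lemma sum_fin_split {M : Type*} [AddCommMonoid M] {n : ℕ} (hn : 1 ≤ n) (v : Fin n → M) :
    ∑ i, v i = (∑ j : Fin (n-1), v ⟨j, by omega⟩) + v ⟨n-1, by omega⟩ := by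
  have h : n - 1 + 1 = n := by omega
  rw [← (finCongr h).sum_comp v, Fin.sum_univ_castSucc]
  rfl



/-- The product of two Lie rings, with componentwise bracket. -/
instance prodLieRing {L₁ L₂ : Type*} [LieRing L₁] [LieRing L₂] : LieRing (L₁ × L₂) where
  bracket p q := (⁅p.1, q.1⁆, ⁅p.2, q.2⁆)
  add_lie p q r := Prod.ext (add_lie p.1 q.1 r.1) (add_lie p.2 q.2 r.2)
  lie_add p q r := Prod.ext (lie_add p.1 q.1 r.1) (lie_add p.2 q.2 r.2)
  lie_self p := Prod.ext (lie_self p.1) (lie_self p.2)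
  leibniz_lie p q r := Prod.ext (leibniz_lie p.1 q.1 r.1) (leibniz_lie p.2 q.2 r.2)

/-- The product of two Lie algebras. -/
instance prodLieAlgebra {K L₁ L₂ : Type*} [CommRing K] [LieRing L₁] [LieRing L₂]
    [LieAlgebra K L₁] [LieAlgebra K L₂] : LieAlgebra K (L₁ × L₂) where
  lie_smul c p q := Prod.ext (lie_smul c p.1 q.1) (lie_smul c p.2 q.2)

/-- The holonomy Lie algebra of the uniform matroid `U_{2,n}`, i.e. the
quotient of the free Lie algebra on `x₁, …, xₙ` (over `ℚ`) by the Lie ideal generated by the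
elements `[xᵢ, x₁ + ⋯ + xₙ]`, is isomorphic to the direct product of a free Lie algebra on
`n - 1` generators and a free Lie algebra on one generator. -/
theorem holonomy_uniform_rank_two (n : ℕ) (hn : 2 ≤ n) :
    let L := FreeLieAlgebra ℚ (Fin n)
    let x : Fin n → L := FreeLieAlgebra.of ℚ
    let I : LieIdeal ℚ L :=
      LieSubmodule.lieSpan ℚ L {y | ∃ i : Fin n, y = ⁅x i, ∑ j : Fin n, x j⁆}
    Nonempty ((L ⧸ I) ≃ₗ⁅ℚ⁆ (FreeLieAlgebra ℚ (Fin (n - 1)) × FreeLieAlgebra ℚ Unit)) := by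
  intro L x I
  classical
  have hn0 : (n : ℚ) ≠ 0 := Nat.cast_ne_zero.mpr (by omega)
  set A := FreeLieAlgebra ℚ (Fin (n-1)) with hA
  set B := FreeLieAlgebra ℚ Unit with hB
  let w : B := FreeLieAlgebra.of ℚ ()
  let S : A := ∑ j : Fin (n-1), FreeLieAlgebra.of ℚ j
  let z : L := ∑ j : Fin n, x j
  let last : Fin n := ⟨n-1, by omega⟩
  let emb : Fin (n-1) → Fin n := fun j => ⟨j, by omega⟩
  let g : Fin n → A := fun i =>
    if h : (i : ℕ) < n - 1 then FreeLieAlgebra.of ℚ (⟨i, h⟩ : Fin (n-1)) else 0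
  let c : ℚ := (n : ℚ)⁻¹
  let f : Fin n → A × B := fun i => (g i - c • S, c • w)
  let φ : L →ₗ⁅ℚ⁆ A × B := FreeLieAlgebra.lift ℚ f
  have prodlie : ∀ (p q : A × B), ⁅p, q⁆ = (⁅p.1, q.1⁆, ⁅p.2, q.2⁆) := fun _ _ => rfl
  have hglast : g last = 0 := dif_neg (by simp [last])
  have hgemb : ∀ j : Fin (n-1), g (emb j) = FreeLieAlgebra.of ℚ j := by
    intro j
    have h : ((emb j : Fin n) : ℕ) < n - 1 := j.2
    rw [show g (emb j) = FreeLieAlgebra.of ℚ (⟨emb j, h⟩ : Fin (n-1)) from dif_pos h]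
  have hsum_g : ∑ i, g i = S := by
    rw [sum_fin_split (by omega) g]
    have : g ⟨n-1, by omega⟩ = 0 := hglast
    rw [this, add_zero]
    refine Finset.sum_congr rfl fun j _ => ?_
    exact hgemb j
  have hφ : ∀ i, φ (x i) = f i := fun i => FreeLieAlgebra.lift_of_apply f i
  have hncS : ∀ {M : Type} [AddCommGroup M] [Module ℚ M] (u : M), (n : ℕ) • (c • u) = u := by
    intro M _ _ u
    rw [← Nat.cast_smul_eq_nsmul ℚ, smul_smul, mul_inv_cancel₀ hn0, one_smul]
  have hφz : φ z = (0, w) := by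
    show φ.toLinearMap (∑ j, x j) = (0, w)
    rw [map_sum]
    simp only [LieHom.coe_toLinearMap]
    rw [Finset.sum_congr rfl (fun i _ => hφ i)]
    ext
    · show (∑ i, f i).1 = 0
      rw [Prod.fst_sum]
      simp only [f]
      rw [Finset.sum_sub_distrib, hsum_g, Finset.sum_const, Finset.card_univ,
        Fintype.card_fin, hncS S, sub_self]
    · show (∑ i, f i).2 = w
      rw [Prod.snd_sum]
      simp only [f]
      rw [Finset.sum_const, Finset.card_univ, Fintype.card_fin, hncS w]
  have hIker : I ≤ φ.ker := by
    rw [LieSubmodule.lieSpan_le]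
    rintro y ⟨i, rfl⟩
    have : φ ⁅x i, z⁆ = 0 := by
      rw [φ.map_lie, hφ, hφz, prodlie]
      ext
      · show ⁅(f i).1, (0 : A)⁆ = 0; exact lie_zero _
      · show ⁅c • w, w⁆ = 0; rw [smul_lie, lie_self, smul_zero]
    exact LieHom.mem_ker.mpr this
  let π : L →ₗ⁅ℚ⁆ L ⧸ I :=
    { toLinearMap := (I : Submodule ℚ L).mkQ
      map_lie' := by
        intro a b
        show (LieSubmodule.Quotient.mk ⁅a, b⁆ : L ⧸ I) =
          ⁅(LieSubmodule.Quotient.mk a : L ⧸ I), (LieSubmodule.Quotient.mk b : L ⧸ I)⁆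
        exact LieSubmodule.Quotient.mk_bracket (R := ℚ) (L := L) (I := I) a b }
  let φbar : (L ⧸ I) →ₗ⁅ℚ⁆ A × B :=
    { toLinearMap := (I : Submodule ℚ L).liftQ φ.toLinearMap
        (fun a ha => LieHom.mem_ker.mp (hIker ha))
      map_lie' := by
        rintro ⟨a⟩ ⟨b⟩
        show φ ⁅a, b⁆ = ⁅φ a, φ b⁆
        exact φ.map_lie a b }
  have hφbarπ : ∀ y : L, φbar (π y) = φ y := fun _ => rfl
  have hπsurj : ∀ u : L ⧸ I, ∃ y : L, π y = u := fun u =>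
    Submodule.Quotient.mk_surjective (I : Submodule ℚ L) u
  have hgen : ∀ i, ⁅π (x i), π z⁆ = 0 := by
    intro i
    rw [← π.map_lie]
    show Submodule.Quotient.mk ⁅x i, z⁆ = 0
    rw [Submodule.Quotient.mk_eq_zero]
    exact LieSubmodule.subset_lieSpan ⟨i, rfl⟩
  let C : LieSubalgebra ℚ (L ⧸ I) :=
    { carrier := {u | ⁅u, π z⁆ = 0}
      add_mem' := by
        intro a b ha hb
        show ⁅a + b, π z⁆ = 0
        rw [add_lie, ha, hb, add_zero]
      zero_mem' := zero_lie _
      smul_mem' := by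
        intro t a ha
        show ⁅t • a, π z⁆ = 0
        rw [smul_lie, ha, smul_zero]
      lie_mem' := by
        intro a b ha hb
        show ⁅⁅a, b⁆, π z⁆ = 0
        rw [lie_lie, ha, hb, lie_zero, lie_zero, sub_zero] }
  have hcen : ∀ y : L, ⁅π y, π z⁆ = 0 := by
    intro y
    let h : L →ₗ⁅ℚ⁆ C := FreeLieAlgebra.lift ℚ (fun i => ⟨π (x i), hgen i⟩)
    have hcomp : C.incl.comp h = π := by
      apply FreeLieAlgebra.hom_ext
      intro i
      show (C.incl) (h (FreeLieAlgebra.of ℚ i)) = π (x i)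
      rw [show h (FreeLieAlgebra.of ℚ i) = ⟨π (x i), hgen i⟩ from
        FreeLieAlgebra.lift_of_apply _ i]
      rfl
    have : π y = (h y : L ⧸ I) := (LieHom.congr_fun hcomp y).symm
    rw [this]
    exact (h y).2
  have hcenq : ∀ (u : L ⧸ I) (t : ℚ), ⁅u, t • π z⁆ = 0 := by
    intro u t
    obtain ⟨y, rfl⟩ := hπsurj u
    rw [lie_smul, hcen, smul_zero]
  have hcenq' : ∀ (u : L ⧸ I) (t : ℚ), ⁅t • π z, u⁆ = 0 := by
    intro u t
    rw [← lie_skew, hcenq, neg_zero]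
  let ψ₁ : A →ₗ⁅ℚ⁆ L ⧸ I := FreeLieAlgebra.lift ℚ (fun j => π (x (emb j)) - π (x last))
  let σ : B →ₗ⁅ℚ⁆ ℚ := FreeLieAlgebra.lift ℚ (fun _ => (1:ℚ))
  let ψ : (A × B) →ₗ⁅ℚ⁆ L ⧸ I :=
    { toFun := fun p => ψ₁ p.1 + σ p.2 • π z
      map_add' := by
        intro p q
        show ψ₁ (p.1 + q.1) + σ (p.2 + q.2) • π z = _
        rw [map_add, map_add, add_smul]
        abel
      map_smul' := by
        intro t p
        show ψ₁ (t • p.1) + σ (t • p.2) • π z = t • (ψ₁ p.1 + σ p.2 • π z)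
        rw [map_smul, map_smul, smul_eq_mul, mul_smul, smul_add]
      map_lie' := by
        intro p q
        show ψ₁ ⁅p.1, q.1⁆ + σ ⁅p.2, q.2⁆ • π z =
          ⁅ψ₁ p.1 + σ p.2 • π z, ψ₁ q.1 + σ q.2 • π z⁆
        rw [lie_add, add_lie, add_lie, hcenq, hcenq', hcenq', LieHom.map_lie ψ₁, LieHom.map_lie σ]
        rw [Ring.lie_def, mul_comm, sub_self, zero_smul]
        simp }
  -- φbar ∘ ψ₁ = inl
  let J : A →ₗ⁅ℚ⁆ A × B :=
    { toFun := fun a => (a, 0)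
      map_add' := by intro a b; ext <;> simp
      map_smul' := by intro t a; ext <;> simp
      map_lie' := by
        intro a b
        rw [prodlie]
        exact Prod.ext rfl (lie_zero _).symm }
  have hJ : φbar.comp ψ₁ = J := by
    apply FreeLieAlgebra.hom_ext
    intro j
    show φbar (ψ₁ (FreeLieAlgebra.of ℚ j)) = (FreeLieAlgebra.of ℚ j, 0)
    rw [show ψ₁ (FreeLieAlgebra.of ℚ j) = π (x (emb j)) - π (x last) from
      FreeLieAlgebra.lift_of_apply _ j]
    rw [map_sub, hφbarπ, hφbarπ, hφ, hφ]
    ext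
    · show ((g (emb j) - c • S) - (g last - c • S)) = FreeLieAlgebra.of ℚ j
      rw [hgemb, hglast]
      abel
    · show (c • w - c • w) = 0
      rw [sub_self]
  have hσw : σ w = 1 := FreeLieAlgebra.lift_of_apply _ ()
  -- right inverse: φbar (ψ p) = p
  have hright : ∀ p : A × B, φbar (ψ p) = p := by
    intro p
    show φbar (ψ₁ p.1 + σ p.2 • π z) = p
    rw [map_add, map_smul, hφbarπ z, hφz]
    have h1 : φbar (ψ₁ p.1) = (p.1, 0) := LieHom.congr_fun hJ p.1
    rw [h1]
    ext
    · show p.1 + σ p.2 • (0:A) = p.1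
      rw [smul_zero, add_zero]
    · show (0:B) + σ p.2 • w = p.2
      rw [zero_add]
      exact freeLie_unit_eq p.2
  -- key sum computation for ψ₁ S
  have hsumx : ∑ j : Fin (n-1), x (emb j) = z - x last := by
    have := sum_fin_split (by omega : 1 ≤ n) x
    show ∑ j : Fin (n-1), x ⟨j, _⟩ = z - x ⟨n-1, _⟩
    rw [show z = ∑ i, x i from rfl, this]
    abel
  have hψ₁S : c • ψ₁ S = c • π z - π (x last) := by
    have h1 : ψ₁ S = π z - (n:ℚ) • π (x last) := by
      show ψ₁.toLinearMap (∑ j : Fin (n-1), FreeLieAlgebra.of ℚ j) = _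
      rw [map_sum]
      simp only [LieHom.coe_toLinearMap]
      have hterm : ∀ j ∈ Finset.univ, ψ₁ (FreeLieAlgebra.of ℚ j) = π (x (emb j)) - π (x last) :=
        fun j _ => FreeLieAlgebra.lift_of_apply _ j
      rw [Finset.sum_congr rfl hterm, Finset.sum_sub_distrib,
        show (∑ j : Fin (n-1), π (x (emb j))) = π.toLinearMap (∑ j : Fin (n-1), x (emb j)) from
          (map_sum π.toLinearMap _ _).symm,
        hsumx]
      show π (z - x last) - (∑ _j : Fin (n-1), π (x last)) = _
      rw [map_sub, Finset.sum_const, Finset.card_univ, Fintype.card_fin]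
      rw [← Nat.cast_smul_eq_nsmul ℚ (n-1) (π (x last))]
      have : ((n - 1 : ℕ) : ℚ) = (n : ℚ) - 1 := by
        rw [Nat.cast_sub (by omega)]; norm_num
      rw [this, sub_smul, one_smul]
      abel
    rw [h1, smul_sub, smul_smul, inv_mul_cancel₀ hn0, one_smul]
  -- left inverse
  have hK : ψ.comp φ = π := by
    apply FreeLieAlgebra.hom_ext
    intro i
    show ψ (φ (x i)) = π (x i)
    rw [hφ i]
    show ψ₁ (g i - c • S) + σ (c • w) • π z = π (x i)
    rw [map_sub, map_smul, map_smul, hσw, smul_eq_mul, mul_one, hψ₁S]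
    by_cases h : (i : ℕ) < n - 1
    · rw [show g i = FreeLieAlgebra.of ℚ (⟨i, h⟩ : Fin (n-1)) from dif_pos h]
      rw [show ψ₁ (FreeLieAlgebra.of ℚ (⟨i, h⟩ : Fin (n-1)))
          = π (x (emb ⟨i, h⟩)) - π (x last) from FreeLieAlgebra.lift_of_apply _ _]
      have : emb ⟨i, h⟩ = i := by ext; rfl
      rw [this]
      abel
    · rw [show g i = 0 from dif_neg h, map_zero]
      have : i = last := by ext; have := i.2; simp only [last]; omega
      rw [this]
      abel
  have hleft : ∀ u : L ⧸ I, ψ (φbar u) = u := by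
    intro u
    obtain ⟨y, rfl⟩ := hπsurj u
    rw [hφbarπ]
    exact LieHom.congr_fun hK y
  exact ⟨{ φbar with invFun := ψ, left_inv := hleft, right_inv := hright }⟩
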